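/- arXiv:2601.11670 — 2 statements merged into one kernel-verified Lean document; each statement's English description precedes it below -/
import Mathlib

section
/- Let K ≥ 2 be a natural number, let k' ∈ Fin K, let p : Fin K → ℝ satisfy p(k) > 0 for all k and ∑ₖ p(k) = 1, and let ε > 0. Set μ = (1 − p(k'))/(K−1), δ(k) = p(k) − μ for k ≠ k', and v = (1/(K−1))·∑_{k≠k'} δ(k)². Assume there exists ρ ∈ (0,1) with |δ(k)| ≤ ρ·μ for all k ≠ k'. Then | (−log p(k') − ε·∑_{k≠k'} log p(k)) − (−log p(k') − ε·(K−1)·log μ + ((K−1)³·ε / (2·(1−p(k'))²))·v) | ≤ ε·(K−1)^{3/2}·v^{3/2} / (3·(1−ρ)³·μ³). -/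
set_option maxHeartbeats 1000000

open Real Finset intervalIntegral

lemma log_quad_deriv {t : ℝ} (h : 0 < 1 + t) :
    HasDerivAt (fun s => Real.log (1 + s) - (s - s^2/2)) (t^2/(1+t)) t := by
  have h1 : HasDerivAt (fun s : ℝ => 1 + s) 1 t := by
    simpa using (hasDerivAt_id t).const_add 1
  have h2 : HasDerivAt (fun s => Real.log (1 + s)) (1/(1+t)) t := by
    simpa using h1.log (ne_of_gt h)
  have h3 : HasDerivAt (fun s : ℝ => s - s^2/2) (1 - t) t := by
    exact ((hasDerivAt_id' t).sub ((hasDerivAt_pow 2 t).div_const 2)).congr_deriv (by norm_num)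
  have h4 := h2.fun_sub h3
  refine h4.congr_deriv ?_
  have hne : 1 + t ≠ 0 := ne_of_gt h
  field_simp
  ring

lemma log_taylor_bound {ρ x : ℝ} (hρ1 : ρ < 1) (hx : |x| ≤ ρ) :
    |Real.log (1 + x) - (x - x^2/2)| ≤ |x|^3 / (3 * (1 - ρ)) := by
  have hρ0 : 0 ≤ ρ := le_trans (abs_nonneg x) hx
  have hρpos : 0 < 1 - ρ := by linarith
  have habs : ∀ t ∈ Set.uIcc (0:ℝ) x, 1 - ρ ≤ 1 + t := by
    intro t ht
    rcases abs_le.mp hx with ⟨hl, hr⟩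
    rw [Set.uIcc_eq_union] at ht
    rcases ht with h | h <;> rcases h with ⟨a, b⟩ <;> linarith
  have hpos : ∀ t ∈ Set.uIcc (0:ℝ) x, 0 < 1 + t := fun t ht => lt_of_lt_of_le hρpos (habs t ht)
  have hcont : ContinuousOn (fun t : ℝ => t^2/(1+t)) (Set.uIcc 0 x) := by
    apply ContinuousOn.div (continuous_pow 2).continuousOn
      (continuous_const.add continuous_id).continuousOn
    intro t ht; exact ne_of_gt (hpos t ht)
  have hint : IntervalIntegrable (fun t : ℝ => t^2/(1+t)) MeasureTheory.volume 0 x :=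
    hcont.intervalIntegrable
  have key : ∫ t in (0:ℝ)..x, t^2/(1+t) = Real.log (1+x) - (x - x^2/2) := by
    rw [intervalIntegral.integral_eq_sub_of_hasDerivAt
      (fun t ht => log_quad_deriv (hpos t ht)) hint]
    simp
  rw [← key]
  have hint2 : IntervalIntegrable (fun t : ℝ => t^2/(1-ρ)) MeasureTheory.volume 0 x :=
    (Continuous.intervalIntegrable (by continuity) 0 x)
  have hptw : ∀ t ∈ Set.uIcc (0:ℝ) x, |t^2/(1+t)| ≤ t^2/(1-ρ) := by
    intro t ht
    rw [abs_of_nonneg (div_nonneg (sq_nonneg t) (hpos t ht).le)]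
    exact div_le_div_of_nonneg_left (sq_nonneg t) hρpos (habs t ht)
  rcases le_or_gt 0 x with hx0 | hx0
  · calc |∫ t in (0:ℝ)..x, t^2/(1+t)| ≤ ∫ t in (0:ℝ)..x, |t^2/(1+t)| :=
        intervalIntegral.abs_integral_le_integral_abs hx0
      _ ≤ ∫ t in (0:ℝ)..x, t^2/(1-ρ) := by
        apply intervalIntegral.integral_mono_on hx0 hint.abs hint2
        intro t ht
        exact hptw t (Set.mem_uIcc_of_le ht.1 ht.2)
      _ = |x|^3 / (3*(1-ρ)) := by
        rw [intervalIntegral.integral_div, integral_pow, abs_of_nonneg hx0, div_div]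
        norm_num
  · rw [intervalIntegral.integral_symm x 0, abs_neg]
    calc |∫ t in x..(0:ℝ), t^2/(1+t)| ≤ ∫ t in x..(0:ℝ), |t^2/(1+t)| :=
        intervalIntegral.abs_integral_le_integral_abs hx0.le
      _ ≤ ∫ t in x..(0:ℝ), t^2/(1-ρ) := by
        apply intervalIntegral.integral_mono_on hx0.le hint.symm.abs hint2.symm
        intro t ht
        have : t ∈ Set.uIcc (0:ℝ) x := by
          rw [Set.uIcc_comm]; exact Set.mem_uIcc_of_le ht.1 ht.2
        exact hptw t this
      _ = |x|^3 / (3*(1-ρ)) := by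
        rw [intervalIntegral.integral_div, integral_pow, abs_of_nonpos hx0.le, div_div]
        ring


lemma sum_abs_cube_le {ι : Type*} (s : Finset ι) (f : ι → ℝ) :
    ∑ k ∈ s, |f k| ^ 3 ≤ (∑ k ∈ s, f k ^ 2) ^ ((3:ℝ)/2) := by
  set S := ∑ k ∈ s, f k ^ 2 with hSdef
  have hS : 0 ≤ S := Finset.sum_nonneg fun k _ => sq_nonneg _
  have h1 : ∀ k ∈ s, |f k| ≤ Real.sqrt S := by
    intro k hk
    rw [← Real.sqrt_sq_eq_abs]
    exact Real.sqrt_le_sqrt (Finset.single_le_sum (fun i _ => sq_nonneg (f i)) hk)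
  have h2 : ∑ k ∈ s, |f k| ^ 3 ≤ S * Real.sqrt S := by
    calc ∑ k ∈ s, |f k| ^ 3 = ∑ k ∈ s, (f k ^ 2 * |f k|) := by
          apply Finset.sum_congr rfl; intro k _
          rw [← sq_abs]; ring
      _ ≤ ∑ k ∈ s, (f k ^ 2 * Real.sqrt S) :=
          Finset.sum_le_sum fun k hk =>
            mul_le_mul_of_nonneg_left (h1 k hk) (sq_nonneg _)
      _ = S * Real.sqrt S := by rw [← Finset.sum_mul]
  have h3 : S ^ ((3:ℝ)/2) = S * Real.sqrt S := by
    rw [show (3:ℝ)/2 = 1 + 1/2 by norm_num,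
      Real.rpow_add' hS (by norm_num), Real.rpow_one,
      ← Real.sqrt_eq_rpow]
  linarith


/-- Quadratic cross-entropy decomposition (Lemma 1): the smoothed cross-entropy
`−log p(k′) − ε ∑_{k≠k′} log p(k)` equals
`−log p(k′) − ε(K−1) log μ + ((K−1)³ε/(2(1−p(k′))²)) v` up to a remainder bounded by
`ε (K−1)^(3/2) v^(3/2) / (3(1−ρ)³ μ³)`. -/
theorem quadratic_ce_decomposition (K : ℕ) (hK : 2 ≤ K) (k' : Fin K) (p : Fin K → ℝ)
    (hp : ∀ k, 0 < p k) (hsum : ∑ k, p k = 1) (ε : ℝ) (hε : 0 < ε)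
    (ρ : ℝ) (hρ : ρ ∈ Set.Ioo (0 : ℝ) 1)
    (μ : ℝ) (hμ : μ = (1 - p k') / ((K : ℝ) - 1))
    (δ : Fin K → ℝ) (hδ : ∀ k, δ k = p k - μ)
    (v : ℝ) (hv : v = (1 / ((K : ℝ) - 1)) * ∑ k ∈ Finset.univ.erase k', δ k ^ 2)
    (hbound : ∀ k ∈ Finset.univ.erase k', |δ k| ≤ ρ * μ) :
    |(-Real.log (p k') - ε * ∑ k ∈ Finset.univ.erase k', Real.log (p k)) -
      (-Real.log (p k') - ε * ((K : ℝ) - 1) * Real.log μ +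
        (((K : ℝ) - 1) ^ 3 * ε / (2 * (1 - p k') ^ 2)) * v)| ≤
      ε * ((K : ℝ) - 1) ^ ((3 : ℝ) / 2) * v ^ ((3 : ℝ) / 2) /
        (3 * (1 - ρ) ^ 3 * μ ^ 3) := by
  obtain ⟨hρ0, hρ1⟩ := hρ
  have hρpos : 0 < 1 - ρ := by linarith
  set S := Finset.univ.erase k' with hSdef
  have hKR : (2:ℝ) ≤ (K:ℝ) := by exact_mod_cast hK
  have hKpos : 0 < (K:ℝ) - 1 := by linarith
  have hcard : (S.card : ℝ) = (K:ℝ) - 1 := by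
    rw [hSdef, Finset.card_erase_of_mem (Finset.mem_univ k'), Finset.card_univ,
      Fintype.card_fin]
    have : 1 ≤ K := by omega
    push_cast [this]
    ring
  have hsumS : ∑ k ∈ S, p k = 1 - p k' := by
    have h := Finset.add_sum_erase Finset.univ p (Finset.mem_univ k')
    rw [hsum] at h
    linarith
  have hne : S.Nonempty := by
    rw [← Finset.card_pos]
    have : (0:ℝ) < (S.card : ℝ) := by rw [hcard]; linarith
    exact_mod_cast this
  have hppos : 0 < 1 - p k' := by
    rw [← hsumS]
    exact Finset.sum_pos (fun k _ => hp k) hne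
  have hμpos : 0 < μ := by rw [hμ]; exact div_pos hppos hKpos
  have hμK : ((K:ℝ) - 1) * μ = 1 - p k' := by rw [hμ]; field_simp
  have hδsum : ∑ k ∈ S, δ k = 0 := by
    have : ∑ k ∈ S, δ k = ∑ k ∈ S, p k - (S.card : ℝ) * μ := by
      simp [hδ, Finset.sum_sub_distrib]
    rw [this, hsumS, hcard]
    linarith
  have hvsum : ∑ k ∈ S, δ k ^ 2 = ((K:ℝ)-1) * v := by
    rw [hv]; field_simp
  have hv0 : 0 ≤ v := by
    rw [hv]
    have : 0 ≤ ∑ k ∈ S, δ k ^ 2 := Finset.sum_nonneg fun k _ => sq_nonneg _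
    positivity
  have hlog : ∀ k ∈ S, Real.log (p k) = Real.log μ + Real.log (1 + δ k / μ) := by
    intro k hk
    have h1 : 1 + δ k / μ = p k / μ := by rw [hδ]; field_simp; ring
    rw [h1, Real.log_div (hp k).ne' hμpos.ne']
    ring
  have hsumlog : ∑ k ∈ S, Real.log (p k)
      = ((K:ℝ)-1) * Real.log μ + ∑ k ∈ S, Real.log (1 + δ k / μ) := by
    rw [Finset.sum_congr rfl hlog, Finset.sum_add_distrib, Finset.sum_const,
      nsmul_eq_mul, hcard]
  have hE : (-Real.log (p k') - ε * ∑ k ∈ S, Real.log (p k)) -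
      (-Real.log (p k') - ε * ((K:ℝ)-1) * Real.log μ +
        (((K:ℝ)-1)^3 * ε / (2*(1-p k')^2)) * v)
      = -ε * ∑ k ∈ S, (Real.log (1 + δ k / μ) - (δ k / μ - (δ k / μ)^2/2)) := by
    rw [hsumlog]
    have e1 : ∑ k ∈ S, (Real.log (1 + δ k/μ) - (δ k/μ - (δ k/μ)^2/2))
        = ∑ k ∈ S, Real.log (1 + δ k/μ) - (∑ k ∈ S, δ k)/μ
          + (∑ k ∈ S, δ k^2)/(2*μ^2) := by
      have hterm : ∀ k ∈ S, Real.log (1 + δ k/μ) - (δ k/μ - (δ k/μ)^2/2)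
          = Real.log (1 + δ k/μ) - δ k/μ + δ k^2/(2*μ^2) := by
        intro k _
        field_simp
        ring
      rw [Finset.sum_congr rfl hterm, Finset.sum_add_distrib, Finset.sum_sub_distrib,
        ← Finset.sum_div, ← Finset.sum_div]
    rw [e1, hδsum, hvsum]
    have e2 : (((K:ℝ)-1)^3 * ε / (2*(1-p k')^2)) * v = ε * (((K:ℝ)-1)*v) / (2*μ^2) := by
      rw [← hμK]
      field_simp
    rw [e2]
    ring
  rw [hE]
  have hx : ∀ k ∈ S, |δ k / μ| ≤ ρ := by
    intro k hk
    rw [abs_div, abs_of_pos hμpos, div_le_iff₀ hμpos]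
    exact hbound k hk
  have hb1 : |∑ k ∈ S, (Real.log (1 + δ k/μ) - (δ k/μ - (δ k/μ)^2/2))|
      ≤ (∑ k ∈ S, |δ k/μ|^3) / (3*(1-ρ)) := by
    rw [Finset.sum_div]
    refine (Finset.abs_sum_le_sum_abs _ _).trans (Finset.sum_le_sum ?_)
    intro k hk
    exact log_taylor_bound hρ1 (hx k hk)
  have hb2 : ∑ k ∈ S, |δ k/μ|^3 = (∑ k ∈ S, |δ k|^3) / μ^3 := by
    rw [Finset.sum_div]
    apply Finset.sum_congr rfl; intro k _
    rw [abs_div, div_pow, abs_of_pos hμpos]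
  have hb3 : ∑ k ∈ S, |δ k|^3 ≤ ((K:ℝ)-1) ^ ((3:ℝ)/2) * v ^ ((3:ℝ)/2) := by
    calc ∑ k ∈ S, |δ k|^3 ≤ (∑ k ∈ S, δ k ^ 2) ^ ((3:ℝ)/2) := sum_abs_cube_le S δ
      _ = (((K:ℝ)-1) * v) ^ ((3:ℝ)/2) := by rw [hvsum]
      _ = ((K:ℝ)-1) ^ ((3:ℝ)/2) * v ^ ((3:ℝ)/2) := Real.mul_rpow hKpos.le hv0
  have hcube0 : 0 ≤ ∑ k ∈ S, |δ k|^3 := Finset.sum_nonneg fun k _ => by positivity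
  calc |(-ε) * ∑ k ∈ S, (Real.log (1 + δ k/μ) - (δ k/μ - (δ k/μ)^2/2))|
      = ε * |∑ k ∈ S, (Real.log (1 + δ k/μ) - (δ k/μ - (δ k/μ)^2/2))| := by
        rw [abs_mul, abs_neg, abs_of_pos hε]
    _ ≤ ε * ((∑ k ∈ S, |δ k|^3) / μ^3 / (3*(1-ρ))) := by
        rw [← hb2]
        exact mul_le_mul_of_nonneg_left hb1 hε.le
    _ ≤ ε * (((K:ℝ)-1) ^ ((3:ℝ)/2) * v ^ ((3:ℝ)/2) / μ^3 / (3*(1-ρ))) := by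
        gcongr
    _ = ε * ((K:ℝ)-1) ^ ((3:ℝ)/2) * v ^ ((3:ℝ)/2) / (3*(1-ρ)*μ^3) := by
        field_simp
    _ ≤ ε * ((K:ℝ)-1) ^ ((3:ℝ)/2) * v ^ ((3:ℝ)/2) / (3*(1-ρ)^3*μ^3) := by
        have hden : 3*(1-ρ)^3*μ^3 ≤ 3*(1-ρ)*μ^3 := by
          have h0 : (1-ρ)^2 ≤ 1 := by nlinarith [sq_nonneg ρ]
          have h1 : (1-ρ)^3 ≤ 1-ρ := by nlinarith [mul_le_mul_of_nonneg_right h0 hρpos.le]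
          have h2 : 0 < μ^3 := by positivity
          nlinarith [mul_le_mul_of_nonneg_right h1 h2.le]
        have hC : 0 ≤ ε * ((K:ℝ)-1)^((3:ℝ)/2) * v^((3:ℝ)/2) := by positivity
        have hdpos : 0 < 3*(1-ρ)^3*μ^3 := by positivity
        exact div_le_div_of_nonneg_left hC hdpos hden
end

section
/- Let K ≥ 2 be a natural number, let k' ∈ Fin K, let p : Fin K → ℝ satisfy p(k) > 0 for all k and ∑ₖ p(k) = 1, with p(k') < 1. Set μ = (1 − p(k'))/(K−1), δ(k) = p(k) − μ for k ≠ k', and v = (1/(K−1))·∑_{k≠k'} δ(k)². Assume there exists ρ ∈ (0,1) with |δ(k)| ≤ ρ·μ for all k ≠ k'. Then, with the adaptive smoothing weight ε = μ, | (−log p(k') − μ·∑_{k≠k'} log p(k)) − (−log p(k') − (1−p(k'))·log μ + ((K−1)² / (2·(1−p(k'))))·v) | ≤ (K−1)^{3/2}·v^{3/2} / (3·(1−ρ)³·μ²). -/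
lemma mono_aux {a b : ℝ} {f f' : ℝ → ℝ}
    (hd : ∀ x ∈ Set.Icc a b, HasDerivAt f (f' x) x)
    (h0 : ∀ x ∈ Set.Icc a b, 0 ≤ f' x) : MonotoneOn f (Set.Icc a b) := by
  apply monotoneOn_of_hasDerivWithinAt_nonneg (convex_Icc a b)
    (fun x hx => (hd x hx).continuousAt.continuousWithinAt)
    (f' := f')
  · intro x hx
    exact (hd x (interior_subset hx)).hasDerivWithinAt
  · intro x hx
    exact h0 x (interior_subset hx)

lemma log_deriv_aux {x : ℝ} (hx : -1 < x) :
    HasDerivAt (fun t : ℝ => Real.log (1 + t) - t + t ^ 2 / 2) (x ^ 2 / (1 + x)) x := by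
  have h1 : (0:ℝ) < 1 + x := by linarith
  have hlog : HasDerivAt (fun t : ℝ => Real.log (1 + t)) (1 / (1 + x)) x := by
    have := (Real.hasDerivAt_log h1.ne').comp x ((hasDerivAt_id x).const_add 1)
    simpa [Function.comp_def] using this
  have h := ((hlog.sub (hasDerivAt_id x)).add
    (((hasDerivAt_id x).pow 2).div_const 2))
  refine h.congr_deriv ?_
  simp only [id]
  field_simp
  ring

lemma R_bound {ρ : ℝ} (hρ0 : 0 < ρ) (hρ1 : ρ < 1) {x : ℝ} (hx : |x| ≤ ρ) :
    |Real.log (1 + x) - x + x ^ 2 / 2| ≤ |x| ^ 3 / (3 * (1 - ρ) ^ 3) := by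
  have hxm : x ∈ Set.Icc (-ρ) ρ := by
    rw [Set.mem_Icc]; constructor <;> [linarith [abs_le.mp hx]; exact (abs_le.mp hx).2]
  have h0m : (0:ℝ) ∈ Set.Icc (-ρ) ρ := by constructor <;> linarith
  have h1ρ : (0:ℝ) < 1 - ρ := by linarith
  have hc : (0:ℝ) < 3 * (1 - ρ) ^ 3 := by positivity
  have hcube : (1 - ρ) ^ 3 ≤ 1 - ρ := by nlinarith [sq_nonneg (1-ρ)]
  set f : ℝ → ℝ := fun t => Real.log (1 + t) - t + t ^ 2 / 2 with hf
  set g : ℝ → ℝ := fun t => t ^ 3 / (3 * (1 - ρ) ^ 3) - f t with hg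
  have hgt : ∀ t ∈ Set.Icc (-ρ) ρ, (0:ℝ) < 1 + t := fun t ht => by
    have := ht.1; linarith
  have hmf : MonotoneOn f (Set.Icc (-ρ) ρ) := by
    apply mono_aux (f' := fun t => t ^ 2 / (1 + t))
    · intro t ht; exact log_deriv_aux (by linarith [(hgt t ht)])
    · intro t ht; exact div_nonneg (sq_nonneg t) (hgt t ht).le
  have hmg : MonotoneOn g (Set.Icc (-ρ) ρ) := by
    apply mono_aux (f' := fun t => 3 * t ^ 2 / (3 * (1 - ρ) ^ 3) - t ^ 2 / (1 + t))
    · intro t ht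
      exact ((((hasDerivAt_id t).pow 3).div_const (3 * (1 - ρ) ^ 3)).sub
        (log_deriv_aux (by linarith [hgt t ht]))).congr_deriv (by simp only [id_eq]; ring)
    · intro t ht
      have h1t := hgt t ht
      have h1 : (1 - ρ) ^ 3 ≤ 1 + t := le_trans hcube (by linarith [ht.1])
      have h2 : t ^ 2 / (1 + t) ≤ 3 * t ^ 2 / (3 * (1 - ρ) ^ 3) := by
        rw [div_le_div_iff₀ h1t hc]
        nlinarith [sq_nonneg t]
      linarith
  have hf0 : f 0 = 0 := by simp [hf]
  have hg0 : g 0 = 0 := by simp [hg, hf0]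
  rcases le_or_gt 0 x with hx0 | hx0
  · have h1 := hmf h0m hxm hx0
    have h2 := hmg h0m hxm hx0
    rw [hf0] at h1; rw [hg0] at h2
    rw [abs_of_nonneg h1, abs_of_nonneg hx0]
    simp only [hg, sub_nonneg] at h2
    linarith [h2]
  · have h1 := hmf hxm h0m hx0.le
    have h2 := hmg hxm h0m hx0.le
    rw [hf0] at h1; rw [hg0] at h2
    rw [abs_of_nonpos h1, abs_of_neg hx0]
    simp only [hg] at h2
    have : x ^ 3 / (3 * (1 - ρ) ^ 3) ≤ f x := by linarith
    have hx3 : (-x) ^ 3 = -(x ^ 3) := by ring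
    rw [hx3, neg_div]
    linarith

/-- Single-sample reliability corollary with adaptive smoothing `ε = μ`:
`|CE − (−log p(k') − (1−p(k'))·log μ + ((K−1)²/(2(1−p(k'))))·v)|
 ≤ (K−1)^(3/2)·v^(3/2) / (3(1−ρ)³μ²)`. -/
theorem adaptive_ce_decomposition (K : ℕ) (hK : 2 ≤ K) (k' : Fin K) (p : Fin K → ℝ)
    (hp : ∀ k, 0 < p k) (hsum : ∑ k, p k = 1) (hlt : p k' < 1)
    (ρ : ℝ) (hρ : ρ ∈ Set.Ioo (0 : ℝ) 1)
    (μ : ℝ) (hμ : μ = (1 - p k') / ((K : ℝ) - 1))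
    (δ : Fin K → ℝ) (hδ : ∀ k, δ k = p k - μ)
    (v : ℝ) (hv : v = (1 / ((K : ℝ) - 1)) * ∑ k ∈ Finset.univ.erase k', δ k ^ 2)
    (hbound : ∀ k ∈ Finset.univ.erase k', |δ k| ≤ ρ * μ) :
    |(-Real.log (p k') - μ * ∑ k ∈ Finset.univ.erase k', Real.log (p k)) -
      (-Real.log (p k') - (1 - p k') * Real.log μ +
        (((K : ℝ) - 1) ^ 2 / (2 * (1 - p k'))) * v)| ≤
      ((K : ℝ) - 1) ^ ((3 : ℝ) / 2) * v ^ ((3 : ℝ) / 2) /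
        (3 * (1 - ρ) ^ 3 * μ ^ 2) := by
  obtain ⟨hρ0, hρ1⟩ := hρ
  set S := Finset.univ.erase k' with hS
  have hK1 : (1:ℝ) ≤ (K : ℝ) - 1 := by
    have : (2:ℝ) ≤ (K:ℝ) := by exact_mod_cast hK
    linarith
  have hKpos : (0:ℝ) < (K:ℝ) - 1 := by linarith
  have hp' : (0:ℝ) < 1 - p k' := by linarith
  have hμ0 : 0 < μ := by rw [hμ]; exact div_pos hp' hKpos
  have hμK : μ * ((K:ℝ) - 1) = 1 - p k' := by
    rw [hμ]; field_simp
  have hcard : (S.card : ℝ) = (K:ℝ) - 1 := by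
    rw [hS, Finset.card_erase_of_mem (Finset.mem_univ k'), Finset.card_univ, Fintype.card_fin]
    have h1K : 1 ≤ K := le_trans (by norm_num) hK
    rw [Nat.cast_sub h1K, Nat.cast_one]
  have hSp : ∑ k ∈ S, p k = 1 - p k' := by
    have := Finset.sum_erase_add Finset.univ p (Finset.mem_univ k')
    rw [hsum] at this
    linarith
  have hδsum : ∑ k ∈ S, δ k = 0 := by
    simp only [hδ, Finset.sum_sub_distrib, hSp, Finset.sum_const, nsmul_eq_mul]
    rw [hcard]
    linarith [hμK]
  have hδsq : ∑ k ∈ S, δ k ^ 2 = ((K:ℝ) - 1) * v := by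
    rw [hv]; field_simp
  have hvnn : 0 ≤ v := by
    rw [hv]
    have : 0 ≤ ∑ k ∈ S, δ k ^ 2 := Finset.sum_nonneg fun k _ => sq_nonneg _
    positivity
  -- rewrite each log
  have hlog : ∀ k ∈ S, Real.log (p k) = Real.log μ + Real.log (1 + δ k / μ) := by
    intro k _
    have hpk : p k = μ * (1 + δ k / μ) := by
      field_simp [hδ k]
      linarith [hδ k]
    have hne : 1 + δ k / μ ≠ 0 := by
      have h : 1 + δ k / μ = p k / μ := by rw [hδ k]; field_simp; ring
      rw [h]
      exact (div_pos (hp k) hμ0).ne'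
    rw [hpk, Real.log_mul hμ0.ne' hne]
  have e1 : ∑ k ∈ S, Real.log (p k)
      = ((K:ℝ) - 1) * Real.log μ + ∑ k ∈ S, Real.log (1 + δ k / μ) := by
    rw [Finset.sum_congr rfl hlog, Finset.sum_add_distrib, Finset.sum_const, nsmul_eq_mul, hcard]
  have key : (-Real.log (p k') - μ * ∑ k ∈ S, Real.log (p k)) -
      (-Real.log (p k') - (1 - p k') * Real.log μ +
        (((K : ℝ) - 1) ^ 2 / (2 * (1 - p k'))) * v)
      = -μ * ∑ k ∈ S, (Real.log (1 + δ k / μ) - δ k / μ + (δ k / μ) ^ 2 / 2) := by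
    have expand : ∑ k ∈ S, (Real.log (1 + δ k / μ) - δ k / μ + (δ k / μ) ^ 2 / 2)
        = (∑ k ∈ S, Real.log (1 + δ k / μ)) - (∑ k ∈ S, δ k) / μ
          + (∑ k ∈ S, δ k ^ 2) / μ ^ 2 / 2 := by
      rw [Finset.sum_add_distrib, Finset.sum_sub_distrib]
      congr 1
      · congr 1
        exact (Finset.sum_div _ _ _).symm
      · rw [← Finset.sum_div,
          show ∑ k ∈ S, (δ k / μ) ^ 2 = (∑ k ∈ S, δ k ^ 2) / μ ^ 2 from by
            rw [Finset.sum_div]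
            exact Finset.sum_congr rfl fun k _ => div_pow _ _ _]
    rw [expand, e1, hδsum, hδsq, ← hμK]
    field_simp
    ring
  rw [key]
  -- now bound
  have hcpos : (0:ℝ) < 3 * (1 - ρ) ^ 3 := by
    have : (0:ℝ) < 1 - ρ := by linarith
    positivity
  have step1 : |(-μ) * ∑ k ∈ S, (Real.log (1 + δ k / μ) - δ k / μ + (δ k / μ) ^ 2 / 2)|
      ≤ μ * ∑ k ∈ S, |δ k / μ| ^ 3 / (3 * (1 - ρ) ^ 3) := by
    rw [abs_mul, abs_neg, abs_of_pos hμ0]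
    apply mul_le_mul_of_nonneg_left _ hμ0.le
    refine le_trans (Finset.abs_sum_le_sum_abs _ _) (Finset.sum_le_sum fun k hk => ?_)
    apply R_bound hρ0 hρ1
    rw [abs_div, abs_of_pos hμ0, div_le_iff₀ hμ0]
    exact le_trans (hbound k hk) (by rw [mul_comm])
  refine le_trans step1 ?_
  have habs : ∀ k : Fin K, |δ k / μ| ^ 3 = |δ k| ^ 3 / μ ^ 3 := fun k => by
    rw [abs_div, abs_of_pos hμ0, div_pow]
  have step2 : μ * ∑ k ∈ S, |δ k / μ| ^ 3 / (3 * (1 - ρ) ^ 3)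
      = (∑ k ∈ S, |δ k| ^ 3) / (3 * (1 - ρ) ^ 3 * μ ^ 2) := by
    rw [← Finset.sum_div, Finset.sum_congr rfl fun k _ => habs k, ← Finset.sum_div]
    field_simp
  rw [step2]
  set T : ℝ := ((K:ℝ) - 1) * v with hT
  have hTnn : 0 ≤ T := mul_nonneg hKpos.le hvnn
  have step3 : ∑ k ∈ S, |δ k| ^ 3 ≤ T * Real.sqrt T := by
    have hb : ∀ k ∈ S, |δ k| ^ 3 ≤ δ k ^ 2 * Real.sqrt T := by
      intro k hk
      have h1 : δ k ^ 2 ≤ T := by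
        rw [← hδsq]
        exact Finset.single_le_sum (fun j _ => sq_nonneg (δ j)) hk
      have h2 : |δ k| ≤ Real.sqrt T := by
        rw [← Real.sqrt_sq_eq_abs]
        exact Real.sqrt_le_sqrt h1
      calc |δ k| ^ 3 = δ k ^ 2 * |δ k| := by rw [← sq_abs (δ k)]; ring
        _ ≤ δ k ^ 2 * Real.sqrt T := mul_le_mul_of_nonneg_left h2 (sq_nonneg _)
    calc ∑ k ∈ S, |δ k| ^ 3 ≤ ∑ k ∈ S, δ k ^ 2 * Real.sqrt T := Finset.sum_le_sum hb
      _ = T * Real.sqrt T := by rw [← Finset.sum_mul, hδsq]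
  have r32 : ∀ t : ℝ, 0 ≤ t → t ^ ((3:ℝ)/2) = t * Real.sqrt t := by
    intro t ht
    rcases eq_or_lt_of_le ht with h | h
    · rw [← h, Real.zero_rpow (by norm_num), Real.sqrt_zero, mul_zero]
    · rw [show (3:ℝ)/2 = 1 + 1/2 by norm_num, Real.rpow_add h, Real.rpow_one,
        Real.sqrt_eq_rpow]
  have hnum : ((K:ℝ) - 1) ^ ((3:ℝ)/2) * v ^ ((3:ℝ)/2) = T * Real.sqrt T := by
    rw [r32 _ hKpos.le, r32 _ hvnn, hT, Real.sqrt_mul hKpos.le]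
    ring
  rw [hnum]
  have hd : 0 < 3 * (1 - ρ) ^ 3 * μ ^ 2 := mul_pos hcpos (pow_pos hμ0 2)
  exact (div_le_div_iff_of_pos_right hd).mpr step3
end
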